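/- In a discrete-time market on (Ω, F, P) with filtration (G_t)_{t=0}^T, if Q is a probability measure absolutely continuous with respect to P under which the discounted price process of every asset satisfies E_Q[S_j(T) | G_0] ≤ S_j(0) (where G_0 is trivial) and S₀ ≡ 1, and B ≥ 0 is a claim that is super-replicable by a nonnegative self-financing (G_t)-adapted strategy H with initial cost v (i.e., S(T)·H(T-1) ≥ B a.s., S(t)·ΔH(t) = 0 for 1 ≤ t ≤ T-1, H(t) ≥ 0 componentwise, S(0)·H(0) ≤ v), and Q is a mixed conditional super-martingale measure in the sense E_Q[S_j(t+1)|G_t] ≤ E_Q[S_j(t)|G_t] for all assets j and all t, then E_Q[B] ≤ v (weak duality). -/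

import Mathlib

open MeasureTheory Finset ENNReal

lemma lemA {Ω : Type*} {m F : MeasurableSpace Ω} (hm : m ≤ F)
    (Q : Measure Ω) [IsFiniteMeasure Q] {f g : Ω → ℝ}
    (hf : Integrable f Q) (hg : Integrable g Q)
    (hfnn : ∀ ω, 0 ≤ f ω) (hgnn : ∀ ω, 0 ≤ g ω)
    (hfm : Measurable f) (hgm : Measurable g)
    (hle : ∀ᵐ ω ∂Q, (Q[f|m]) ω ≤ (Q[g|m]) ω)
    {h : Ω → ℝ≥0∞} (hh : Measurable[m] h) :
    ∫⁻ ω, ENNReal.ofReal (f ω) * h ω ∂Q ≤ ∫⁻ ω, ENNReal.ofReal (g ω) * h ω ∂Q := by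
  have key : ∀ A : Set Ω, MeasurableSet[m] A →
      ∫⁻ ω in A, ENNReal.ofReal (f ω) ∂Q ≤ ∫⁻ ω in A, ENNReal.ofReal (g ω) ∂Q := by
    intro A hA
    rw [← ofReal_integral_eq_lintegral_ofReal (hf.restrict)
      (Filter.Eventually.of_forall hfnn),
      ← ofReal_integral_eq_lintegral_ofReal (hg.restrict)
      (Filter.Eventually.of_forall hgnn)]
    apply ENNReal.ofReal_le_ofReal
    rw [← setIntegral_condExp hm hf hA, ← setIntegral_condExp hm hg hA]
    exact setIntegral_mono_ae integrable_condExp.restrict integrable_condExp.restrict hle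
  set μf := (Q.withDensity (fun ω => ENNReal.ofReal (f ω))).trim hm with hμf
  set μg := (Q.withDensity (fun ω => ENNReal.ofReal (g ω))).trim hm with hμg
  have hlem : μf ≤ μg := by
    rw [Measure.le_iff]
    intro A hA
    rw [hμf, hμg, trim_measurableSet_eq hm hA, trim_measurableSet_eq hm hA,
      withDensity_apply _ (hm A hA), withDensity_apply _ (hm A hA)]
    exact key A hA
  have hfd : ∫⁻ ω, h ω ∂μf = ∫⁻ ω, ENNReal.ofReal (f ω) * h ω ∂Q := by
    rw [hμf, lintegral_trim hm hh,
      lintegral_withDensity_eq_lintegral_mul Q (hfm.ennreal_ofReal)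
        (hh.mono hm le_rfl)]
    rfl
  have hgd : ∫⁻ ω, h ω ∂μg = ∫⁻ ω, ENNReal.ofReal (g ω) * h ω ∂Q := by
    rw [hμg, lintegral_trim hm hh,
      lintegral_withDensity_eq_lintegral_mul Q (hgm.ennreal_ofReal)
        (hh.mono hm le_rfl)]
    rfl
  rw [← hfd, ← hgd]
  exact lintegral_mono' hlem le_rfl

theorem stmt13 {Ω : Type*} {F : MeasurableSpace Ω} (P Q : Measure Ω)
    [IsProbabilityMeasure P] [IsProbabilityMeasure Q] (hQP : Q ≪ P)
    (T N : ℕ) (hT : 1 ≤ T)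
    (G : ℕ → MeasurableSpace Ω) (hmono : Monotone G) (hGF : ∀ t, G t ≤ F)
    (hG0 : G 0 = ⊥) (hGT : G T = F)
    (S : ℕ → Ω → Fin (N + 1) → ℝ)
    (hSnn : ∀ t ω j, 0 ≤ S t ω j)
    (hbond : ∀ t ω, S t ω 0 = 1)
    (hSadapt : ∀ t j, Measurable fun ω => S t ω j)
    (hSint : ∀ t j, Integrable (fun ω => S t ω j) Q)
    (hsuper : ∀ (j : Fin (N + 1)) (t : ℕ), t < T →
      ∀ᵐ ω ∂Q, (Q[fun ω => S (t + 1) ω j|G t]) ω ≤ (Q[fun ω => S t ω j|G t]) ω)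
    (hinit : ∀ j : Fin (N + 1), ∀ᵐ ω ∂Q, (Q[fun ω => S T ω j|G 0]) ω ≤ S 0 ω j)
    (B : Ω → ℝ) (hBnn : ∀ ω, 0 ≤ B ω) (hBmeas : Measurable B) (hBint : Integrable B Q)
    (v : ℝ) (H : ℕ → Ω → Fin (N + 1) → ℝ)
    (hHadapt : ∀ t j, t ≤ T - 1 → Measurable[G t] fun ω => H t ω j)
    (hHnn : ∀ t ω j, 0 ≤ H t ω j)
    (hsf : ∀ t, 1 ≤ t → t ≤ T - 1 →
      ∀ᵐ ω ∂P, ∑ i, S t ω i * (H t ω i - H (t - 1) ω i) = 0)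
    (hrepl : ∀ᵐ ω ∂P, B ω ≤ ∑ i, S T ω i * H (T - 1) ω i)
    (hcost : ∀ ω, ∑ i, S 0 ω i * H 0 ω i ≤ v) :
    ∫ ω, B ω ∂Q ≤ v := by
      -- setup
    have hQae := hQP.ae_le
    have hne : Nonempty Ω := by
      by_contra hc
      rw [not_nonempty_iff] at hc
      have h1 := measure_univ (μ := Q)
      rw [Set.univ_eq_empty_iff.mpr hc, measure_empty] at h1
      exact zero_ne_one h1
    obtain ⟨ω0⟩ := hne
    have hv0 : 0 ≤ v := le_trans (Finset.sum_nonneg fun i _ =>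
      mul_nonneg (hSnn 0 ω0 i) (hHnn 0 ω0 i)) (hcost ω0)
    have Hmeas : ∀ s i, s ≤ T - 1 → Measurable fun ω => H s ω i :=
      fun s i hs => (hHadapt s i hs).mono (hGF s) le_rfl
    have dec : ∀ t s ω, ENNReal.ofReal (∑ i, S t ω i * H s ω i)
        = ∑ i, ENNReal.ofReal (S t ω i) * ENNReal.ofReal (H s ω i) := by
      intro t s ω
      rw [ENNReal.ofReal_sum_of_nonneg fun i _ => mul_nonneg (hSnn t ω i) (hHnn s ω i)]
      exact Finset.sum_congr rfl fun i _ => ENNReal.ofReal_mul (hSnn t ω i)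
    have split : ∀ t s, s ≤ T - 1 →
        ∫⁻ ω, ENNReal.ofReal (∑ i, S t ω i * H s ω i) ∂Q
        = ∑ i, ∫⁻ ω, ENNReal.ofReal (S t ω i) * ENNReal.ofReal (H s ω i) ∂Q := by
      intro t s hs
      rw [← lintegral_finset_sum (f := fun i ω => ENNReal.ofReal (S t ω i) * ENNReal.ofReal (H s ω i)) _ fun i _ =>
        (hSadapt t i).ennreal_ofReal.mul (Hmeas s i hs).ennreal_ofReal]
      exact lintegral_congr fun ω => dec t s ω
    set I : ℕ → ℝ≥0∞ := fun t => ∫⁻ ω, ENNReal.ofReal (∑ i, S (t + 1) ω i * H t ω i) ∂Q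
      with hI
    have step : ∀ t, t ≤ T - 1 →
        I t ≤ ∫⁻ ω, ENNReal.ofReal (∑ i, S t ω i * H t ω i) ∂Q := by
      intro t ht
      rw [hI]
      simp only
      rw [split (t + 1) t ht, split t t ht]
      refine Finset.sum_le_sum fun i _ => ?_
      exact lemA (hGF t) Q (hSint (t + 1) i) (hSint t i)
        (fun ω => hSnn (t + 1) ω i) (fun ω => hSnn t ω i)
        (hSadapt (t + 1) i) (hSadapt t i)
        (hsuper i t (by omega)) ((hHadapt t i ht).ennreal_ofReal)
    have main : ∀ t, t ≤ T - 1 → I t ≤ ENNReal.ofReal v := by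
      intro t
      induction t with
      | zero =>
        intro ht
        refine le_trans (step 0 ht) ?_
        calc ∫⁻ ω, ENNReal.ofReal (∑ i, S 0 ω i * H 0 ω i) ∂Q
            ≤ ∫⁻ _, ENNReal.ofReal v ∂Q :=
              lintegral_mono fun ω => ENNReal.ofReal_le_ofReal (hcost ω)
          _ = ENNReal.ofReal v := by simp
      | succ n ih =>
        intro ht
        refine le_trans (step (n + 1) ht) (le_trans (le_of_eq ?_) (ih (by omega)))
        have hsf' : ∀ᵐ ω ∂Q, ∑ i, S (n + 1) ω i * (H (n + 1) ω i - H n ω i) = 0 := by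
          have := hsf (n + 1) (by omega) ht
          exact hQae this
        refine lintegral_congr_ae ?_
        filter_upwards [hsf'] with ω hω
        congr 1
        have : ∑ i, S (n + 1) ω i * H (n + 1) ω i
            = ∑ i, S (n + 1) ω i * H n ω i := by
          have h2 : ∑ i, (S (n + 1) ω i * H (n + 1) ω i - S (n + 1) ω i * H n ω i) = 0 := by
            rw [← hω]; exact Finset.sum_congr rfl fun i _ => (mul_sub _ _ _).symm
          rw [Finset.sum_sub_distrib] at h2
          linarith
        rw [this]
    have hfin : ∫⁻ ω, ENNReal.ofReal (B ω) ∂Q ≤ ENNReal.ofReal v := by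
      refine le_trans ?_ (main (T - 1) le_rfl)
      have hTT : T - 1 + 1 = T := by omega
      rw [hI]
      simp only [hTT]
      refine lintegral_mono_ae ?_
      filter_upwards [hQae hrepl] with ω hω
      exact ENNReal.ofReal_le_ofReal hω
    rw [integral_eq_lintegral_of_nonneg_ae (Filter.Eventually.of_forall hBnn)
      hBmeas.aestronglyMeasurable]
    exact ENNReal.toReal_le_of_le_ofReal hv0 hfin
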